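/- Let λ ≥ 0, μ > 0 and c > 0. Define for ε > 0 the functions α₁(ε) = (4/3)λ ε⁻¹ + (8/3)μ(ε + ε⁻¹), α₂(ε) = (4/3)λ ε + (8/3)μ(ε + ε⁻¹), and α_G(ε) = (2/3)·c/(ε + ε⁻¹). Then α₁(ε)/α_G(ε) → ∞ and α₂(ε)/α_G(ε) → ∞ both as ε → 0⁺ and as ε → ∞. In particular there is no constant k > 0, independent of ε, such that k·α_i(ε) ≤ α_G(ε) for all ε > 0 (i = 1, 2): the stabilization scaling α_G is not stable with respect to the aspect ratio. -/

import Mathlib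

open Filter Topology

/-- Instability of the stabilization scaling `α_G` with respect to the aspect ratio: with
`α₁(ε) = (4/3)λ ε⁻¹ + (8/3)μ(ε + ε⁻¹)`, `α₂(ε) = (4/3)λ ε + (8/3)μ(ε + ε⁻¹)` and
`α_G(ε) = (2/3)·c/(ε + ε⁻¹)` (`λ ≥ 0`, `μ > 0`, `c > 0`), the ratios `α₁/α_G` and `α₂/α_G`
tend to `∞` both as `ε → 0⁺` and as `ε → ∞`; in particular there is no `k > 0` independent
of `ε` with `k·α_i(ε) ≤ α_G(ε)` for all `ε > 0`. -/
theorem alphaG_unstable (lam mu c : ℝ) (hlam : 0 ≤ lam) (hmu : 0 < mu) (hc : 0 < c) :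
    let a1 : ℝ → ℝ := fun e => (4 / 3) * lam * e⁻¹ + (8 / 3) * mu * (e + e⁻¹)
    let a2 : ℝ → ℝ := fun e => (4 / 3) * lam * e + (8 / 3) * mu * (e + e⁻¹)
    let aG : ℝ → ℝ := fun e => (2 / 3) * c / (e + e⁻¹)
    Tendsto (fun e => a1 e / aG e) (𝓝[>] (0 : ℝ)) atTop ∧
    Tendsto (fun e => a1 e / aG e) atTop atTop ∧
    Tendsto (fun e => a2 e / aG e) (𝓝[>] (0 : ℝ)) atTop ∧
    Tendsto (fun e => a2 e / aG e) atTop atTop ∧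
    ¬ ∃ k > (0 : ℝ), ∀ e > (0 : ℝ), k * a1 e ≤ aG e ∧ k * a2 e ≤ aG e := by
  intro a1 a2 aG
  -- basic facts
  have hs : ∀ e : ℝ, 0 < e → 0 < e + e⁻¹ := fun e he => by positivity
  have haG : ∀ e : ℝ, 0 < e → 0 < aG e := fun e he => by
    have := hs e he; simp only [aG]; positivity
  have key1 : ∀ e : ℝ, 0 < e → (4 * mu / c) * (e + e⁻¹) ^ 2 ≤ a1 e / aG e := by
    intro e he
    have hse := hs e he
    rw [le_div_iff₀ (haG e he)]
    simp only [a1, aG]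
    have h1 : (4 * mu / c) * (e + e⁻¹) ^ 2 * (2 / 3 * c / (e + e⁻¹))
        = (8/3) * mu * (e + e⁻¹) := by
      field_simp
      ring
    rw [h1]
    nlinarith [mul_nonneg hlam (inv_nonneg.2 he.le)]
  have key2 : ∀ e : ℝ, 0 < e → (4 * mu / c) * (e + e⁻¹) ^ 2 ≤ a2 e / aG e := by
    intro e he
    have hse := hs e he
    rw [le_div_iff₀ (haG e he)]
    simp only [a2, aG]
    have h1 : (4 * mu / c) * (e + e⁻¹) ^ 2 * (2 / 3 * c / (e + e⁻¹))
        = (8/3) * mu * (e + e⁻¹) := by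
      field_simp
      ring
    rw [h1]
    nlinarith [mul_nonneg hlam he.le]
  -- tendsto of the lower bound
  have hsum0 : Tendsto (fun e : ℝ => e + e⁻¹) (𝓝[>] (0:ℝ)) atTop := by
    apply tendsto_atTop_mono' _ _ tendsto_inv_nhdsGT_zero
    filter_upwards [self_mem_nhdsWithin] with e (he : e ∈ Set.Ioi (0:ℝ))
    linarith [he.out]
  have hsumT : Tendsto (fun e : ℝ => e + e⁻¹) atTop atTop := by
    apply tendsto_atTop_mono' _ _ tendsto_id
    filter_upwards [eventually_gt_atTop (0:ℝ)] with e he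
    have : 0 < e⁻¹ := by positivity
    simp only [id]; linarith
  have hcoef : 0 < 4 * mu / c := by positivity
  have hlb0 : Tendsto (fun e : ℝ => (4 * mu / c) * (e + e⁻¹) ^ 2) (𝓝[>] (0:ℝ)) atTop := by
    apply Tendsto.const_mul_atTop hcoef
    simpa [pow_two] using hsum0.atTop_mul_atTop₀ hsum0
  have hlbT : Tendsto (fun e : ℝ => (4 * mu / c) * (e + e⁻¹) ^ 2) atTop atTop := by
    apply Tendsto.const_mul_atTop hcoef
    simpa [pow_two] using hsumT.atTop_mul_atTop₀ hsumT
  have ev0 : ∀ᶠ e in 𝓝[>] (0:ℝ), 0 < e := self_mem_nhdsWithin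
  have evT : ∀ᶠ e in (atTop : Filter ℝ), 0 < e := eventually_gt_atTop 0
  have t1 : Tendsto (fun e => a1 e / aG e) (𝓝[>] (0 : ℝ)) atTop :=
    tendsto_atTop_mono' _ (ev0.mono fun e he => key1 e he) hlb0
  have t2 : Tendsto (fun e => a1 e / aG e) atTop atTop :=
    tendsto_atTop_mono' _ (evT.mono fun e he => key1 e he) hlbT
  have t3 : Tendsto (fun e => a2 e / aG e) (𝓝[>] (0 : ℝ)) atTop :=
    tendsto_atTop_mono' _ (ev0.mono fun e he => key2 e he) hlb0
  have t4 : Tendsto (fun e => a2 e / aG e) atTop atTop :=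
    tendsto_atTop_mono' _ (evT.mono fun e he => key2 e he) hlbT
  refine ⟨t1, t2, t3, t4, ?_⟩
  rintro ⟨k, hk, hbound⟩
  obtain ⟨e, he1, he2⟩ := ((t2.eventually_gt_atTop (1/k)).and evT).exists
  have hb := (hbound e he2).1
  have haGe := haG e he2
  have : a1 e / aG e ≤ 1 / k := by
    rw [div_le_div_iff₀ haGe hk]
    linarith [hb]
  linarith
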